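/- Let χ be a finite nonempty set and let P₁, P₂ be strictly positive probability mass functions on χ. Then for every λ ∈ ℝ, the function F(λ) = log Σ_{x∈χ} P₁(x)^λ P₂(x)^{1−λ} is differentiable at λ with derivative F'(λ) = ( Σ_{x∈χ} P₁(x)^λ P₂(x)^{1−λ} log(P₁(x)/P₂(x)) ) / ( Σ_{x∈χ} P₁(x)^λ P₂(x)^{1−λ} ), which equals D(P_λ ‖ P₂) − D(P_λ ‖ P₁) where P_λ(x) = P₁(x)^λ P₂(x)^{1−λ} / Σ_{x'} P₁(x')^λ P₂(x')^{1−λ}. -/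

import Mathlib

open Real Finset

/-- KL divergence between probability mass functions on a finite set. -/
noncomputable def KL {χ : Type*} [Fintype χ] (P Q : χ → ℝ) : ℝ :=
  ∑ x, P x * Real.log (P x / Q x)

/-- The λ-tilted (geometric) mixture of two probability mass functions. -/
noncomputable def tilt {χ : Type*} [Fintype χ] (P Q : χ → ℝ) (lam : ℝ) : χ → ℝ :=
  fun x => P x ^ lam * Q x ^ (1 - lam) / ∑ y, P y ^ lam * Q y ^ (1 - lam)

/-- F(λ) = log Σ_x P₁(x)^λ P₂(x)^{1−λ} is differentiable with derivative
(Σ_x P₁^λ P₂^{1−λ} log(P₁/P₂)) / (Σ_x P₁^λ P₂^{1−λ}) = D(P_λ‖P₂) − D(P_λ‖P₁). -/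
theorem stmt13 {χ : Type*} [Fintype χ] [Nonempty χ] (P₁ P₂ : χ → ℝ)
    (h₁pos : ∀ x, 0 < P₁ x) (h₂pos : ∀ x, 0 < P₂ x)
    (h₁sum : ∑ x, P₁ x = 1) (h₂sum : ∑ x, P₂ x = 1) (lam : ℝ) :
    HasDerivAt (fun t : ℝ => Real.log (∑ x, P₁ x ^ t * P₂ x ^ (1 - t)))
      ((∑ x, P₁ x ^ lam * P₂ x ^ (1 - lam) * Real.log (P₁ x / P₂ x))
        / (∑ x, P₁ x ^ lam * P₂ x ^ (1 - lam))) lam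
    ∧ (∑ x, P₁ x ^ lam * P₂ x ^ (1 - lam) * Real.log (P₁ x / P₂ x))
        / (∑ x, P₁ x ^ lam * P₂ x ^ (1 - lam))
      = KL (tilt P₁ P₂ lam) P₂ - KL (tilt P₁ P₂ lam) P₁ := by
  set f : χ → ℝ := fun x => P₁ x ^ lam * P₂ x ^ (1 - lam) with hf
  have hfpos : ∀ x, 0 < f x := fun x =>
    mul_pos (Real.rpow_pos_of_pos (h₁pos x) _) (Real.rpow_pos_of_pos (h₂pos x) _)
  have hZpos : 0 < ∑ x, f x := Finset.sum_pos (fun x _ => hfpos x) univ_nonempty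
  have hterm : ∀ x : χ, HasDerivAt (fun t : ℝ => P₁ x ^ t * P₂ x ^ (1 - t))
      (f x * Real.log (P₁ x / P₂ x)) lam := by
    intro x
    have h1 : HasDerivAt (fun t : ℝ => P₁ x ^ t) (P₁ x ^ lam * Real.log (P₁ x)) lam :=
      (Real.hasStrictDerivAt_const_rpow (h₁pos x) lam).hasDerivAt
    have h2 : HasDerivAt (fun t : ℝ => P₂ x ^ (1 - t))
        (-(P₂ x ^ (1 - lam) * Real.log (P₂ x))) lam := by
      have := ((Real.hasStrictDerivAt_const_rpow (h₂pos x) (1 - lam)).hasDerivAt.comp lam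
        ((hasDerivAt_const lam (1:ℝ)).sub (hasDerivAt_id lam)))
      simpa [Function.comp_def] using this
    have := h1.mul h2
    refine this.congr_deriv ?_
    rw [Real.log_div (h₁pos x).ne' (h₂pos x).ne']
    ring
  have hsum : HasDerivAt (fun t : ℝ => ∑ x, P₁ x ^ t * P₂ x ^ (1 - t))
      (∑ x, f x * Real.log (P₁ x / P₂ x)) lam :=
    HasDerivAt.fun_sum (fun x _ => hterm x)
  have hlog := hsum.log hZpos.ne'
  constructor
  · exact hlog
  · have htilt : ∀ x, tilt P₁ P₂ lam x = f x / ∑ y, f y := fun x => rfl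
    have key : ∀ x : χ,
        tilt P₁ P₂ lam x * Real.log (tilt P₁ P₂ lam x / P₂ x)
          - tilt P₁ P₂ lam x * Real.log (tilt P₁ P₂ lam x / P₁ x)
        = (f x * Real.log (P₁ x / P₂ x)) / ∑ y, f y := by
      intro x
      rw [htilt, ← mul_sub]
      set a := f x / ∑ y, f y with ha
      have hapos : 0 < a := div_pos (hfpos x) hZpos
      rw [← Real.log_div (div_pos hapos (h₂pos x)).ne' (div_pos hapos (h₁pos x)).ne']
      have : a / P₂ x / (a / P₁ x) = P₁ x / P₂ x := by
        rw [div_div_div_comm, div_self hapos.ne', one_div, inv_div]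
      rw [this]
      ring
    unfold KL
    rw [← Finset.sum_sub_distrib]
    rw [Finset.sum_congr rfl (fun x _ => key x)]
    rw [← Finset.sum_div]
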